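/- Let Γ be the point graph of a generalised quadrangle of order (s,t). For vertices x, y, the number of 3-element cliques {a,b,c} with each of a,b,c adjacent to y and none adjacent to x equals t·C(s,3) if x ∼ y, and (t+1)·C(s−1,3) if x ≁ y and x ≠ y. -/

import Mathlib

/-- A generalised quadrangle of order `(s, t)`: a partial linear space in which
every line has `s + 1` points, every point is on `t + 1` lines, two distinct
lines meet in at most one point, and for every point `p` not on a line `l` there
is exactly one point of `l` collinear with `p`. -/
structure GenQuadrangle (P : Type*) [Fintype P] [DecidableEq P] (s t : ℕ) where
  lines : Finset (Finset P)
  line_card : ∀ l ∈ lines, l.card = s + 1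
  point_lines : ∀ p : P, (lines.filter fun l => p ∈ l).card = t + 1
  lines_meet : ∀ l ∈ lines, ∀ m ∈ lines, l ≠ m → (l ∩ m).card ≤ 1
  gq : ∀ l ∈ lines, ∀ p : P, p ∉ l → ∃! q, q ∈ l ∧ ∃ m ∈ lines, p ∈ m ∧ q ∈ m

variable {P : Type*} [Fintype P] [DecidableEq P] {s t : ℕ}

/-- The point graph of a generalised quadrangle: points are adjacent iff they are
distinct and collinear. -/
def GenQuadrangle.pointGraph (Q : GenQuadrangle P s t) : SimpleGraph P where
  Adj x y := x ≠ y ∧ ∃ l ∈ Q.lines, x ∈ l ∧ y ∈ l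
  symm := by
    constructor
    rintro x y ⟨h, l, hl, hx, hy⟩
    exact ⟨h.symm, l, hl, hy, hx⟩
  loopless := by
    constructor
    rintro x ⟨h, -⟩
    exact h rfl

instance (Q : GenQuadrangle P s t) : DecidableRel Q.pointGraph.Adj :=
  fun x y => inferInstanceAs (Decidable (x ≠ y ∧ ∃ l ∈ Q.lines, x ∈ l ∧ y ∈ l))

namespace GenQuadrangle

variable (Q : GenQuadrangle P s t)

lemma line_unique {l m : Finset P} (hl : l ∈ Q.lines) (hm : m ∈ Q.lines)
    {a b : P} (hab : a ≠ b) (hal : a ∈ l) (hbl : b ∈ l) (ham : a ∈ m) (hbm : b ∈ m) :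
    l = m := by
  by_contra h
  have h1 := Q.lines_meet l hl m hm h
  have h2 : ({a, b} : Finset P) ⊆ l ∩ m := by
    intro z hz
    simp only [Finset.mem_insert, Finset.mem_singleton] at hz
    rcases hz with rfl | rfl <;> simp [Finset.mem_inter, *]
  have h3 := Finset.card_le_card h2
  rw [Finset.card_insert_of_notMem (by simp [hab]), Finset.card_singleton] at h3
  omega

lemma adj_of_mem {l : Finset P} (hl : l ∈ Q.lines) {a b : P} (hab : a ≠ b)
    (ha : a ∈ l) (hb : b ∈ l) : Q.pointGraph.Adj a b :=
  ⟨hab, l, hl, ha, hb⟩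

lemma mem_of_adj_two {l : Finset P} (hl : l ∈ Q.lines) {a b p : P} (hab : a ≠ b)
    (ha : a ∈ l) (hb : b ∈ l) (hpa : Q.pointGraph.Adj p a) (hpb : Q.pointGraph.Adj p b) :
    p ∈ l := by
  by_contra hp
  obtain ⟨q, -, huniq⟩ := Q.gq l hl p hp
  obtain ⟨-, m1, hm1, hpm1, ham1⟩ := hpa
  obtain ⟨-, m2, hm2, hpm2, hbm2⟩ := hpb
  have e1 := huniq a ⟨ha, m1, hm1, hpm1, ham1⟩
  have e2 := huniq b ⟨hb, m2, hm2, hpm2, hbm2⟩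
  exact hab (e1.trans e2.symm)

def good (x y : P) (l : Finset P) : Finset P :=
  (l.erase y).filter fun a => a ≠ x ∧ ¬ Q.pointGraph.Adj x a

lemma count_eq (x y : P) :
    Set.ncard {S : Finset P | S.card = 3 ∧
        (∀ a ∈ S, a ≠ x ∧ Q.pointGraph.Adj y a ∧ ¬ Q.pointGraph.Adj x a) ∧
        (∀ a ∈ S, ∀ b ∈ S, a ≠ b → Q.pointGraph.Adj a b)} =
      ∑ l ∈ Q.lines.filter (fun l => y ∈ l), ((Q.good x y l).card).choose 3 := by
  have hset : {S : Finset P | S.card = 3 ∧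
        (∀ a ∈ S, a ≠ x ∧ Q.pointGraph.Adj y a ∧ ¬ Q.pointGraph.Adj x a) ∧
        (∀ a ∈ S, ∀ b ∈ S, a ≠ b → Q.pointGraph.Adj a b)} =
      ↑((Q.lines.filter (fun l => y ∈ l)).biUnion fun l => (Q.good x y l).powersetCard 3) := by
    ext S
    simp only [Set.mem_setOf_eq, Finset.coe_biUnion, Finset.mem_coe, Finset.mem_biUnion,
      Finset.mem_filter, Finset.mem_powersetCard, Set.mem_iUnion, exists_prop]
    constructor
    · rintro ⟨hcard, h1, h2⟩
      have hlt : 1 < S.card := by omega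
      obtain ⟨a, ha, b, hb, hab⟩ := Finset.one_lt_card.mp hlt
      obtain ⟨-, l, hl, hal, hbl⟩ := h2 a ha b hb hab
      have hyl : y ∈ l :=
        Q.mem_of_adj_two hl hab hal hbl (h1 a ha).2.1 (h1 b hb).2.1
      refine ⟨l, ⟨hl, hyl⟩, ?_, hcard⟩
      intro c hc
      have hcl : c ∈ l := by
        by_cases hca : c = a
        · rw [hca]; exact hal
        by_cases hcb : c = b
        · rw [hcb]; exact hbl
        exact Q.mem_of_adj_two hl hab hal hbl (h2 c hc a ha hca) (h2 c hc b hb hcb)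
      simp only [good, Finset.mem_filter, Finset.mem_erase]
      exact ⟨⟨((h1 c hc).2.1).ne', hcl⟩, (h1 c hc).1, (h1 c hc).2.2⟩
    · rintro ⟨l, ⟨hl, hyl⟩, hsub, hcard⟩
      refine ⟨hcard, ?_, ?_⟩
      · intro a ha
        have := hsub ha
        simp only [good, Finset.mem_filter, Finset.mem_erase] at this
        exact ⟨this.2.1, Q.adj_of_mem hl (Ne.symm this.1.1) hyl this.1.2, this.2.2⟩
      · intro a ha b hb hab
        have h1 := hsub ha
        have h2 := hsub hb
        simp only [good, Finset.mem_filter, Finset.mem_erase] at h1 h2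
        exact Q.adj_of_mem hl hab h1.1.2 h2.1.2
  rw [hset, Set.ncard_coe_finset, Finset.card_biUnion, Finset.sum_congr rfl]
  · intro l _
    exact Finset.card_powersetCard 3 _
  · intro l hl m hm hlm
    rw [Function.onFun, Finset.disjoint_left]
    intro S hSl hSm
    rw [Finset.mem_powersetCard] at hSl hSm
    have hlt : 1 < S.card := by omega
    obtain ⟨a, ha, b, hb, hab⟩ := Finset.one_lt_card.mp hlt
    simp only [Finset.mem_coe, Finset.mem_filter] at hl hm
    have hal : a ∈ l := (Finset.mem_erase.mp (Finset.mem_filter.mp (hSl.1 ha)).1).2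
    have hbl : b ∈ l := (Finset.mem_erase.mp (Finset.mem_filter.mp (hSl.1 hb)).1).2
    have ham : a ∈ m := (Finset.mem_erase.mp (Finset.mem_filter.mp (hSm.1 ha)).1).2
    have hbm : b ∈ m := (Finset.mem_erase.mp (Finset.mem_filter.mp (hSm.1 hb)).1).2
    exact hlm (Q.line_unique hl.1 hm.1 hab hal hbl ham hbm)

end GenQuadrangle

namespace GenQuadrangle
variable (Q : GenQuadrangle P s t)

lemma case_adj {x y : P} (hxy : Q.pointGraph.Adj x y) :
    ∑ l ∈ Q.lines.filter (fun l => y ∈ l), ((Q.good x y l).card).choose 3 = t * s.choose 3 := by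
  obtain ⟨hne, m, hm, hxm, hym⟩ := hxy
  have hmem : m ∈ Q.lines.filter (fun l => y ∈ l) := Finset.mem_filter.mpr ⟨hm, hym⟩
  rw [← Finset.add_sum_erase _ _ hmem]
  have hgm : Q.good x y m = ∅ := by
    ext a
    simp only [good, Finset.mem_filter, Finset.mem_erase, Finset.notMem_empty, iff_false]
    rintro ⟨⟨hay, ham⟩, hax, hna⟩
    exact hna (Q.adj_of_mem hm (Ne.symm hax) hxm ham)
  rw [hgm]
  rw [Finset.sum_const_nat (m := s.choose 3), Finset.card_erase_of_mem hmem,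
    Q.point_lines y]
  · simp
  · intro l hl
    obtain ⟨hlne, hl'⟩ := Finset.mem_erase.mp hl
    obtain ⟨hl, hyl⟩ := Finset.mem_filter.mp hl'
    have hxl : x ∉ l := fun hxl => hlne (Q.line_unique hl hm hne hxl hyl hxm hym)
    have hgl : Q.good x y l = l.erase y := by
      ext a
      simp only [good, Finset.mem_filter, Finset.mem_erase, and_iff_left_iff_imp]
      rintro ⟨hay, hal⟩
      refine ⟨fun h => hxl (h ▸ hal), ?_⟩
      rintro ⟨hxa, n, hn, hxn, han⟩
      obtain ⟨q, -, hu⟩ := Q.gq l hl x hxl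
      have e1 := hu a ⟨hal, n, hn, hxn, han⟩
      have e2 := hu y ⟨hyl, m, hm, hxm, hym⟩
      exact hay (e1.trans e2.symm)
    rw [hgl, Finset.card_erase_of_mem hyl, Q.line_card l hl]
    simp

lemma case_nonadj {x y : P} (hne : x ≠ y) (hnadj : ¬ Q.pointGraph.Adj x y) :
    ∑ l ∈ Q.lines.filter (fun l => y ∈ l), ((Q.good x y l).card).choose 3 =
      (t + 1) * (s - 1).choose 3 := by
  rw [Finset.sum_const_nat (m := (s - 1).choose 3), Q.point_lines y]
  intro l hl'
  obtain ⟨hl, hyl⟩ := Finset.mem_filter.mp hl'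
  have hxl : x ∉ l := fun hxl => hnadj ⟨hne, l, hl, hxl, hyl⟩
  obtain ⟨q, ⟨hql, mq, hmq, hxmq, hqmq⟩, hu⟩ := Q.gq l hl x hxl
  have hqy : q ≠ y := by
    rintro rfl
    exact hnadj ⟨hne, mq, hmq, hxmq, hqmq⟩
  have hgl : Q.good x y l = (l.erase y).erase q := by
    ext a
    simp only [good, Finset.mem_filter, Finset.mem_erase]
    constructor
    · rintro ⟨⟨hay, hal⟩, hax, hna⟩
      refine ⟨?_, hay, hal⟩
      rintro rfl
      exact hna ⟨Ne.symm hax, mq, hmq, hxmq, hqmq⟩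
    · rintro ⟨haq, hay, hal⟩
      refine ⟨⟨hay, hal⟩, fun h => hxl (h ▸ hal), ?_⟩
      rintro ⟨hxa, n, hn, hxn, han⟩
      exact haq (hu a ⟨hal, n, hn, hxn, han⟩)
  rw [hgl, Finset.card_erase_of_mem (Finset.mem_erase.mpr ⟨hqy, hql⟩),
    Finset.card_erase_of_mem hyl, Q.line_card l hl]
  simp

end GenQuadrangle


/-- Type 3a count for the 5-vertex condition: 3-element cliques all of whose
elements are adjacent to `y`, none adjacent to `x` (and distinct from `x`). -/
theorem type3a_count (Q : GenQuadrangle P s t) (x y : P) :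
    (Q.pointGraph.Adj x y →
      Set.ncard {S : Finset P | S.card = 3 ∧
        (∀ a ∈ S, a ≠ x ∧ Q.pointGraph.Adj y a ∧ ¬ Q.pointGraph.Adj x a) ∧
        (∀ a ∈ S, ∀ b ∈ S, a ≠ b → Q.pointGraph.Adj a b)} = t * s.choose 3) ∧
    (x ≠ y → ¬ Q.pointGraph.Adj x y →
      Set.ncard {S : Finset P | S.card = 3 ∧
        (∀ a ∈ S, a ≠ x ∧ Q.pointGraph.Adj y a ∧ ¬ Q.pointGraph.Adj x a) ∧
        (∀ a ∈ S, ∀ b ∈ S, a ≠ b → Q.pointGraph.Adj a b)} =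
        (t + 1) * (s - 1).choose 3) := by
  constructor
  · intro hxy
    rw [Q.count_eq x y, Q.case_adj hxy]
  · intro hne hnadj
    rw [Q.count_eq x y, Q.case_nonadj hne hnadj]
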